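/- Let A, B be bounded linear operators on a complex Hilbert space H, K a nonempty set of unit vectors, ber(T)=sup_{k∈K}|⟨T k,k⟩|, ‖T‖_ber=sup_{k,l∈K}|⟨T k,l⟩|. Then ‖A + B‖_ber² ≤ ber(A*A + B*B) + 2 ber(B*A). -/

import Mathlib

open ContinuousLinearMap

noncomputable def berNum {H : Type*} [NormedAddCommGroup H] [InnerProductSpace ℂ H]
    (K : Set H) (T : H →L[ℂ] H) : ℝ :=
  sSup {x : ℝ | ∃ k ∈ K, x = ‖(inner ℂ (T k) k : ℂ)‖}

noncomputable def berNorm {H : Type*} [NormedAddCommGroup H] [InnerProductSpace ℂ H]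
    (K : Set H) (T : H →L[ℂ] H) : ℝ :=
  sSup {x : ℝ | ∃ k ∈ K, ∃ l ∈ K, x = ‖(inner ℂ (T k) l : ℂ)‖}

lemma inner_le_berNum {H : Type*} [NormedAddCommGroup H] [InnerProductSpace ℂ H]
    {K : Set H} (hK1 : ∀ k ∈ K, ‖k‖ = 1) (T : H →L[ℂ] H) {k : H} (hk : k ∈ K) :
    ‖(inner ℂ (T k) k : ℂ)‖ ≤ berNum K T := by
  apply le_csSup
  · refine ⟨‖T‖, ?_⟩
    rintro x ⟨j, hj, rfl⟩
    calc ‖(inner ℂ (T j) j : ℂ)‖ ≤ ‖T j‖ * ‖j‖ := norm_inner_le_norm _ _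
      _ ≤ ‖T‖ * ‖j‖ * ‖j‖ := by
          have := T.le_opNorm j
          nlinarith [norm_nonneg j, norm_nonneg (T j), norm_nonneg T]
      _ = ‖T‖ := by rw [hK1 j hj]; ring
  · exact ⟨k, hk, rfl⟩

theorem berNorm_add_sq' {H : Type*} [NormedAddCommGroup H] [InnerProductSpace ℂ H] [CompleteSpace H]
    (A B : H →L[ℂ] H) (K : Set H) (hK : K.Nonempty) (hK1 : ∀ k ∈ K, ‖k‖ = 1) :
    (berNorm K (A + B)) ^ 2
      ≤ berNum K (adjoint A * A + adjoint B * B) + 2 * berNum K (adjoint B * A) := by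
  set C := berNum K (adjoint A * A + adjoint B * B) with hCdef
  set D := berNum K (adjoint B * A) with hDdef
  obtain ⟨k₀, hk₀⟩ := hK
  have key : ∀ k ∈ K, ‖(A + B) k‖ ^ 2 ≤ C + 2 * D := by
    intro k hk
    have h1 : (inner ℂ ((adjoint A * A + adjoint B * B) k) k : ℂ)
        = inner ℂ (A k) (A k) + inner ℂ (B k) (B k) := by
      simp [ContinuousLinearMap.add_apply, ContinuousLinearMap.mul_apply,
        adjoint_inner_left, inner_add_left]
    have h2 : (inner ℂ ((adjoint B * A) k) k : ℂ) = inner ℂ (A k) (B k) := by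
      simp [ContinuousLinearMap.mul_apply, adjoint_inner_left]
    have hC1 : Complex.re (inner ℂ (A k) (A k)) + Complex.re (inner ℂ (B k) (B k)) ≤ C := by
      have := inner_le_berNum hK1 (adjoint A * A + adjoint B * B) hk
      rw [h1] at this
      calc Complex.re (inner ℂ (A k) (A k)) + Complex.re (inner ℂ (B k) (B k))
          = Complex.re ((inner ℂ (A k) (A k) : ℂ) + inner ℂ (B k) (B k)) := by simp
        _ ≤ ‖((inner ℂ (A k) (A k) : ℂ) + inner ℂ (B k) (B k))‖ := Complex.re_le_norm _
        _ ≤ C := this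
    have hD1 : Complex.re (inner ℂ (A k) (B k)) ≤ D := by
      have := inner_le_berNum hK1 (adjoint B * A) hk
      rw [h2] at this
      exact le_trans (Complex.re_le_norm _) this
    have hexp : ‖(A + B) k‖ ^ 2
        = Complex.re (inner ℂ (A k) (A k)) + Complex.re (inner ℂ (B k) (B k))
          + 2 * Complex.re (inner ℂ (A k) (B k)) := by
      have h3 : (A + B) k = A k + B k := rfl
      rw [h3, @norm_add_sq ℂ]
      have hA : ‖A k‖ ^ 2 = Complex.re (inner ℂ (A k) (A k)) :=
        (@inner_self_eq_norm_sq ℂ _ _ _ _ (A k)).symm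
      have hB : ‖B k‖ ^ 2 = Complex.re (inner ℂ (B k) (B k)) :=
        (@inner_self_eq_norm_sq ℂ _ _ _ _ (B k)).symm
      rw [hA, hB]; simp only [RCLike.re_to_complex]; ring
    linarith
  have hRHS : 0 ≤ C + 2 * D := le_trans (sq_nonneg _) (key k₀ hk₀)
  have hmem : ∀ x ∈ {x : ℝ | ∃ k ∈ K, ∃ l ∈ K, x = ‖(inner ℂ ((A + B) k) l : ℂ)‖},
      x ≤ Real.sqrt (C + 2 * D) := by
    rintro x ⟨k, hk, l, hl, rfl⟩
    have h1 : ‖(inner ℂ ((A + B) k) l : ℂ)‖ ≤ ‖(A + B) k‖ := by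
      calc ‖(inner ℂ ((A + B) k) l : ℂ)‖ ≤ ‖(A + B) k‖ * ‖l‖ := norm_inner_le_norm _ _
        _ = ‖(A + B) k‖ := by rw [hK1 l hl, mul_one]
    have h2 : ‖(inner ℂ ((A + B) k) l : ℂ)‖ ^ 2 ≤ C + 2 * D := by
      have := key k hk
      nlinarith [norm_nonneg ((inner ℂ ((A + B) k) l : ℂ)), norm_nonneg ((A + B) k)]
    have := Real.sqrt_le_sqrt h2
    rwa [Real.sqrt_sq (norm_nonneg _)] at this
  have hsup : berNorm K (A + B) ≤ Real.sqrt (C + 2 * D) :=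
    Real.sSup_le hmem (Real.sqrt_nonneg _)
  have hsup0 : 0 ≤ berNorm K (A + B) := by
    have hb : BddAbove {x : ℝ | ∃ k ∈ K, ∃ l ∈ K, x = ‖(inner ℂ ((A + B) k) l : ℂ)‖} :=
      ⟨Real.sqrt (C + 2 * D), hmem⟩
    exact le_trans (norm_nonneg (inner ℂ ((A + B) k₀) k₀ : ℂ))
      (le_csSup hb ⟨k₀, hk₀, k₀, hk₀, rfl⟩)
  nlinarith [Real.sq_sqrt hRHS, Real.sqrt_nonneg (C + 2 * D)]
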